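/- (Elimination formula, strongly connected case without *.) Let G be a strongly connected labeled multidigraph with nodes U_1,…,U_m and edge labels v_e > 0, and consider the linear system Σ_{e : t(e)=U_i} v_e u_{s(e)} − Σ_{e : s(e)=U_i} v_e u_i = 0 for all i, together with u_1 + … + u_m = T. Then this system has the unique solution u_i = T · (Σ_{τ ∈ Θ(U_i)} π(τ)) / (Σ_{j=1}^m Σ_{τ ∈ Θ(U_j)} π(τ)), where Θ(U_i) is the set of spanning trees of G rooted at U_i and π(τ) is the product of the labels of the edges of τ. In particular, all u_i are nonnegative, and positive if T > 0. -/

import Mathlib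

/-- A multidigraph: a set of nodes `V`, a set of edges `E`, and source/target maps. -/
structure Multidigraph (V E : Type*) where
  src : E → V
  tgt : E → V

namespace Multidigraph

variable {V E : Type*}

/-- One-step edge relation using only the edges in `τ`. -/
def Rel (G : Multidigraph V E) (τ : Set E) (a b : V) : Prop :=
  ∃ e ∈ τ, G.src e = a ∧ G.tgt e = b

/-- Undirected (symmetrized) one-step relation. -/
def URel (G : Multidigraph V E) (a b : V) : Prop :=
  G.Rel Set.univ a b ∨ G.Rel Set.univ b a

/-- Node set of the (weakly) connected component containing `v`. -/
def component (G : Multidigraph V E) (v : V) : Set V :=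
  {w | Relation.ReflTransGen G.URel v w}

/-- `τ` is a spanning tree of the subgraph of `G` induced on the node set `W`,
rooted at `r`: all edges stay inside `W`, every non-root node of `W` has exactly
one outgoing edge in `τ`, the root has none, and every node of `W` reaches `r`
through `τ`. -/
def IsSpanningTreeOn (G : Multidigraph V E) (W : Set V) (τ : Finset E) (r : V) : Prop :=
  (∀ e ∈ τ, G.src e ∈ W ∧ G.tgt e ∈ W) ∧
  (∀ v ∈ W, v ≠ r → ∃! e, e ∈ τ ∧ G.src e = v) ∧
  (∀ e ∈ τ, G.src e ≠ r) ∧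
  (∀ v ∈ W, Relation.ReflTransGen (G.Rel (τ : Set E)) v r)

/-- Spanning tree of `G` rooted at `r`. -/
def IsSpanningTree (G : Multidigraph V E) (τ : Finset E) (r : V) : Prop :=
  G.IsSpanningTreeOn Set.univ τ r

/-- A cycle: a nonempty closed directed path with pairwise distinct nodes. -/
def IsCycle (G : Multidigraph V E) (l : List E) : Prop :=
  l ≠ [] ∧ (l.map G.src).Nodup ∧
  l.Chain' (fun a b => G.tgt a = G.src b) ∧
  ∀ h : l ≠ [], G.tgt (l.getLast h) = G.src (l.head h)

def StronglyConnected (G : Multidigraph V E) : Prop :=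
  ∀ a b : V, Relation.ReflTransGen (G.Rel Set.univ) a b

def Connected (G : Multidigraph V E) : Prop :=
  ∀ a b : V, Relation.ReflTransGen G.URel a b

/-- Incidence matrix of a multidigraph. -/
def incidence [DecidableEq V] (G : Multidigraph V E) : Matrix V E ℝ := fun v e =>
  if G.tgt e = v ∧ G.src e ≠ v then 1
  else if G.src e = v ∧ G.tgt e ≠ v then (-1 : ℝ) else 0

end Multidigraph

open scoped Classical


open Relation Finset
open scoped Classical

namespace MyAux

variable {V E : Type} (G : Multidigraph V E)


lemma rel_mono {s t : Set E} (h : s ⊆ t) {a b : V} (hr : G.Rel s a b) : G.Rel t a b := by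
  obtain ⟨e, he, h1, h2⟩ := hr; exact ⟨e, h he, h1, h2⟩

lemma rtg_mono {s t : Set E} (h : s ⊆ t) {a b : V} (hr : ReflTransGen (G.Rel s) a b) :
    ReflTransGen (G.Rel t) a b :=
  ReflTransGen.mono (fun _ _ hh => rel_mono G h hh) a b hr

lemma avoid_root {s : Set E} {r w : V} (h : ReflTransGen (G.Rel s) w r) :
    ReflTransGen (G.Rel {e ∈ s | G.src e ≠ r}) w r := by
  induction h using ReflTransGen.head_induction_on with
  | refl => exact .refl
  | @head a c h' _ ih =>
    by_cases hac : a = r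
    · subst hac; exact .refl
    · obtain ⟨e, he, h1, h2⟩ := h'
      exact ih.head ⟨e, ⟨he, h1 ▸ hac⟩, h1, h2⟩

lemma split_edge {s : Set E} {f : E} {a b : V} (h : ReflTransGen (G.Rel s) a b) :
    ReflTransGen (G.Rel (s \ {f})) a b ∨ ReflTransGen (G.Rel (s \ {f})) a (G.src f) := by
  induction h using ReflTransGen.head_induction_on with
  | refl => exact .inl .refl
  | head h' _ ih =>
    obtain ⟨e, he, h1, h2⟩ := h'
    by_cases hef : e = f
    · exact .inr (by rw [← h1, hef])
    · rcases ih with ih | ih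
      · exact .inl (ih.head ⟨e, ⟨he, hef⟩, h1, h2⟩)
      · exact .inr (ih.head ⟨e, ⟨he, hef⟩, h1, h2⟩)

def Uniq (s : Set E) : Prop := ∀ e₁ ∈ s, ∀ e₂ ∈ s, G.src e₁ = G.src e₂ → e₁ = e₂

lemma det {s : Set E} (hu : Uniq G s) {a b c : V} (h1 : G.Rel s a b) (h2 : G.Rel s a c) :
    b = c := by
  obtain ⟨e1, he1, hs1, ht1⟩ := h1
  obtain ⟨e2, he2, hs2, ht2⟩ := h2
  rw [← ht1, ← ht2, hu e1 he1 e2 he2 (by rw [hs1, hs2])]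

lemma no_cycle {s : Set E} (hu : Uniq G s) {r : V} (hroot : ∀ e ∈ s, G.src e ≠ r)
    {w : V} (hwr : ReflTransGen (G.Rel s) w r) : ¬ TransGen (G.Rel s) w w := by
  induction hwr using ReflTransGen.head_induction_on with
  | refl =>
    intro h
    obtain ⟨b, ⟨e, he, hs, _⟩, _⟩ := TransGen.head'_iff.mp h
    exact hroot e he hs
  | @head a c h' hcb ih =>
    intro h
    obtain ⟨z, ⟨e, he, hs, ht⟩, hz⟩ := TransGen.head'_iff.mp h
    have hzc : z = c := det G hu ⟨e, he, hs, ht⟩ h'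
    subst hzc
    exact ih (TransGen.tail' hz h')

lemma crossing {R : V → V → Prop} {S : Set V} {a b : V} (h : ReflTransGen R a b)
    (ha : a ∉ S) (hb : b ∈ S) : ∃ x y, x ∉ S ∧ y ∈ S ∧ R x y := by
  induction h using ReflTransGen.head_induction_on with
  | refl => exact absurd hb ha
  | @head x y h' _ ih =>
    by_cases hy : y ∈ S
    · exact ⟨x, y, ha, hy, h'⟩
    · exact ih hy

lemma closure_rtg {R : V → V → Prop} {S : Set V} (hcl : ∀ a b, R a b → b ∈ S → a ∈ S)
    {j i : V} (h : ReflTransGen R j i) (hi : i ∈ S) : j ∈ S := by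
  induction h using ReflTransGen.head_induction_on with
  | refl => exact hi
  | head h' _ ih => exact hcl _ _ h' ih

def GoodOn (S : Finset V) (r : V) (τ : Finset E) : Prop :=
  (∀ e ∈ τ, G.src e ∈ S ∧ G.src e ≠ r ∧ G.tgt e ∈ S) ∧
  (∀ v ∈ S, v ≠ r → ∃! e, e ∈ τ ∧ G.src e = v) ∧
  (∀ v ∈ S, ReflTransGen (G.Rel (τ : Set E)) v r)

lemma grow [Fintype V] (hsc : G.StronglyConnected) (r : V) :
    ∀ (k : ℕ) (S : Finset V), r ∈ S → (Finset.univ \ S).card ≤ k →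
    ∀ τ : Finset E, GoodOn G S r τ → ∃ τ' : Finset E, GoodOn G Finset.univ r τ' := by
  intro k
  induction k with
  | zero =>
    intro S hr hc τ hg
    have hS : S = Finset.univ := by
      have := Finset.card_eq_zero.mp (Nat.le_zero.mp hc)
      have : Finset.univ ⊆ S := fun x _ => by
        by_contra hx
        exact absurd (Finset.mem_sdiff.mpr ⟨Finset.mem_univ x, hx⟩) (by simp [this])
      exact Finset.eq_univ_of_forall (fun x => this (Finset.mem_univ x))
    exact ⟨τ, hS ▸ hg⟩
  | succ k ih =>
    intro S hr hc τ hg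
    by_cases hS : S = Finset.univ
    · exact ⟨τ, hS ▸ hg⟩
    · obtain ⟨x0, hx0⟩ : ∃ x, x ∉ S := by
        by_contra h; push_neg at h; exact hS (Finset.eq_univ_of_forall h)
      obtain ⟨x, y, hx, hy, hxy⟩ := crossing (S := {w | w ∈ S}) (hsc x0 r) hx0 hr
      obtain ⟨e, _, hes, het⟩ := hxy
      have hx' : x ∉ S := hx
      have hy' : y ∈ S := hy
      refine ih (insert x S) (Finset.mem_insert_of_mem hr) ?_ (insert e τ) ?_
      · have hxmem : x ∈ Finset.univ \ S := Finset.mem_sdiff.mpr ⟨Finset.mem_univ x, hx'⟩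
        have : Finset.univ \ insert x S = (Finset.univ \ S).erase x := by
          ext w; simp [Finset.mem_sdiff, Finset.mem_erase, and_comm, not_or]
        rw [this, Finset.card_erase_of_mem hxmem]
        omega
      · obtain ⟨hg1, hg2, hg3⟩ := hg
        have hxr : x ≠ r := fun h => hx' (h ▸ hr)
        have henotin : e ∉ τ := fun h => hx' ((hes ▸ (hg1 e h).1))
        refine ⟨?_, ?_, ?_⟩
        · intro f hf
          rcases Finset.mem_insert.mp hf with h | h
          · subst h
            exact ⟨hes ▸ Finset.mem_insert_self x S, hes ▸ hxr,
              Finset.mem_insert_of_mem (het ▸ hy')⟩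
          · exact ⟨Finset.mem_insert_of_mem (hg1 f h).1, (hg1 f h).2.1,
              Finset.mem_insert_of_mem (hg1 f h).2.2⟩
        · intro w hw hwr
          rcases Finset.mem_insert.mp hw with h | h
          · subst h
            refine ⟨e, ⟨Finset.mem_insert_self e τ, hes⟩, ?_⟩
            rintro f ⟨hf, hfs⟩
            rcases Finset.mem_insert.mp hf with h | h
            · exact h
            · exact absurd (hfs ▸ (hg1 f h).1) hx'
          · obtain ⟨f, ⟨hf1, hf2⟩, hfu⟩ := hg2 w h hwr
            refine ⟨f, ⟨Finset.mem_insert_of_mem hf1, hf2⟩, ?_⟩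
            rintro f' ⟨hf', hfs'⟩
            rcases Finset.mem_insert.mp hf' with h' | h'
            · subst h'
              exact absurd (show x ∈ S by rw [show x = w from by rw [← hes, hfs']]; exact h) hx'
            · exact hfu f' ⟨h', hfs'⟩
        · intro w hw
          have hsub : (τ : Set E) ⊆ ((insert e τ : Finset E) : Set E) := by
            intro f hf; simp only [Finset.coe_insert, Set.mem_insert_iff]; exact .inr hf
          rcases Finset.mem_insert.mp hw with h | h
          · subst h
            exact .head ⟨e, by simp, hes, het⟩ (rtg_mono G hsub (hg3 y hy'))
          · exact rtg_mono G hsub (hg3 w h)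

lemma exists_spanning_tree [Fintype V] [Fintype E] (hsc : G.StronglyConnected) (r : V) :
    ∃ τ : Finset E, G.IsSpanningTree τ r := by
  obtain ⟨τ, h1, h2, h3⟩ := grow G hsc r (Finset.univ \ ({r} : Finset V)).card {r}
    (Finset.mem_singleton_self r) le_rfl ∅
    ⟨by simp, by simp, fun w hw => by simp at hw; subst hw; exact .refl⟩
  exact ⟨τ, fun e he => ⟨trivial, trivial⟩,
    fun w _ hwr => h2 w (Finset.mem_univ w) hwr,
    fun e he => (h1 e he).2.1,
    fun w _ => h3 w (Finset.mem_univ w)⟩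

end MyAux
section TreeId
open Relation Finset MyAux
open scoped Classical

variable {V E : Type} [Fintype V] [Fintype E] (G : Multidigraph V E) (v : E → ℝ)

/-- Functional subgraphs all whose orbits reach `i`. -/
def IsGood (i : V) (g : Finset E) : Prop :=
  (∀ w : V, ∃! e, e ∈ g ∧ G.src e = w) ∧
  (∀ w : V, Relation.ReflTransGen (G.Rel (g : Set E)) w i)

lemma tree_uniq {τ : Finset E} {i : V} (h : G.IsSpanningTree τ i) : Uniq G (↑τ : Set E) := by
  intro e₁ he₁ e₂ he₂ hsrc
  have h1 := h.2.1 (G.src e₁) trivial (h.2.2.1 e₁ he₁)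
  exact (h1.unique ⟨he₁, rfl⟩ ⟨he₂, hsrc.symm⟩).symm ▸ rfl

lemma good_uniq {g : Finset E} {i : V} (h : IsGood G i g) : Uniq G (↑g : Set E) := by
  intro e₁ he₁ e₂ he₂ hsrc
  exact (h.1 (G.src e₁)).unique ⟨he₁, rfl⟩ ⟨he₂, hsrc.symm⟩

lemma tree_of_good {g : Finset E} {i : V} (hg : IsGood G i g) {f : E} (hf : f ∈ g)
    (hreach : ∀ w : V, Relation.ReflTransGen (G.Rel (↑g : Set E)) w (G.src f)) :
    G.IsSpanningTree (g.erase f) (G.src f) := by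
  refine ⟨fun e _ => ⟨trivial, trivial⟩, ?_, ?_, ?_⟩
  · intro w _ hw
    obtain ⟨e, ⟨he, hes⟩, heu⟩ := hg.1 w
    have hef : e ≠ f := fun h => hw (by rw [← hes, h])
    exact ⟨e, ⟨Finset.mem_erase.mpr ⟨hef, he⟩, hes⟩,
      fun e' ⟨he', hes'⟩ => heu e' ⟨Finset.mem_of_mem_erase he', hes'⟩⟩
  · intro e he hes
    exact (Finset.mem_erase.mp he).1 ((hg.1 (G.src f)).unique ⟨Finset.mem_of_mem_erase he, hes⟩ ⟨hf, rfl⟩)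
  · intro w _
    have h1 := avoid_root G (r := G.src f) (hreach w)
    refine rtg_mono G ?_ h1
    intro e ⟨he, hes⟩
    exact Finset.mem_coe.mpr (Finset.mem_erase.mpr ⟨fun h => hes (h ▸ rfl), he⟩)

lemma good_insert_out {τ : Finset E} {i : V} (hτ : G.IsSpanningTree τ i) {e : E}
    (he : G.src e = i) : IsGood G i (insert e τ) := by
  have het : e ∉ τ := fun h => hτ.2.2.1 e h he
  constructor
  · intro w
    by_cases hw : w = i
    · subst hw
      refine ⟨e, ⟨Finset.mem_insert_self e τ, he⟩, ?_⟩
      rintro e' ⟨he', hes'⟩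
      rcases Finset.mem_insert.mp he' with h | h
      · exact h
      · exact absurd hes' (hτ.2.2.1 e' h)
    · obtain ⟨f, ⟨hf, hfs⟩, hfu⟩ := hτ.2.1 w trivial hw
      refine ⟨f, ⟨Finset.mem_insert_of_mem hf, hfs⟩, ?_⟩
      rintro f' ⟨hf', hfs'⟩
      rcases Finset.mem_insert.mp hf' with h | h
      · exact absurd (h ▸ hfs' : G.src e = w) (fun hh => hw (by rw [← hh, he]))
      · exact hfu f' ⟨h, hfs'⟩
  · intro w
    have hsub : (↑τ : Set E) ⊆ (↑(insert e τ) : Set E) := by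
      intro x hx
      simp only [Finset.coe_insert, Set.mem_insert_iff]
      exact .inr hx
    exact rtg_mono G hsub (hτ.2.2.2 w trivial)

lemma good_insert_in {σ : Finset E} {f : E} {i : V} (hσ : G.IsSpanningTree σ (G.src f))
    (hf : G.tgt f = i) : IsGood G i (insert f σ) := by
  have hft : f ∉ σ := fun h => hσ.2.2.1 f h rfl
  constructor
  · intro w
    by_cases hw : w = G.src f
    · subst hw
      refine ⟨f, ⟨Finset.mem_insert_self f σ, rfl⟩, ?_⟩
      rintro e' ⟨he', hes'⟩
      rcases Finset.mem_insert.mp he' with h | h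
      · exact h
      · exact absurd hes' (hσ.2.2.1 e' h)
    · obtain ⟨e, ⟨he, hes⟩, heu⟩ := hσ.2.1 w trivial hw
      refine ⟨e, ⟨Finset.mem_insert_of_mem he, hes⟩, ?_⟩
      rintro e' ⟨he', hes'⟩
      rcases Finset.mem_insert.mp he' with h | h
      · exact absurd (h ▸ hes' : G.src f = w) (fun hh => hw hh.symm)
      · exact heu e' ⟨h, hes'⟩
  · intro w
    have hsub : (↑σ : Set E) ⊆ (↑(insert f σ) : Set E) := by
      intro x hx
      simp only [Finset.coe_insert, Set.mem_insert_iff]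
      exact .inr hx
    have h1 : Relation.ReflTransGen (G.Rel (↑(insert f σ) : Set E)) w (G.src f) :=
      rtg_mono G hsub (hσ.2.2.2 w trivial)
    exact h1.tail ⟨f, by simp, rfl, hf⟩

lemma key_inj {i : V} {f₁ f₂ : E} {σ₁ σ₂ : Finset E}
    (h1 : G.IsSpanningTree σ₁ (G.src f₁)) (h2 : G.IsSpanningTree σ₂ (G.src f₂))
    (ht1 : G.tgt f₁ = i) (ht2 : G.tgt f₂ = i)
    (heq : insert f₁ σ₁ = insert f₂ σ₂) : f₁ = f₂ := by
  by_contra hne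
  have hn1 : f₁ ∉ σ₁ := fun h => h1.2.2.1 f₁ h rfl
  have hn2 : f₂ ∉ σ₂ := fun h => h2.2.2.1 f₂ h rfl
  have hf2in : f₂ ∈ σ₁ := by
    have : f₂ ∈ insert f₁ σ₁ := heq ▸ Finset.mem_insert_self f₂ σ₂
    rcases Finset.mem_insert.mp this with h | h
    · exact absurd h.symm hne
    · exact h
  have hf1in : f₁ ∈ σ₂ := by
    have : f₁ ∈ insert f₂ σ₂ := heq ▸ Finset.mem_insert_self f₁ σ₁
    rcases Finset.mem_insert.mp this with h | h
    · exact absurd h hne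
    · exact h
  have hreach1 : Relation.ReflTransGen (G.Rel (↑σ₁ : Set E)) i (G.src f₁) := h1.2.2.2 i trivial
  rcases split_edge G (f := f₂) hreach1 with hc | hc
  · -- path from i to src f₁ avoiding f₂ : lies in σ₂, giving a cycle in σ₂
    have hsub : ((↑σ₁ : Set E) \ {f₂}) ⊆ (↑σ₂ : Set E) := by
      intro e ⟨he, hef⟩
      have : e ∈ insert f₂ σ₂ := heq ▸ Finset.mem_insert_of_mem (Finset.mem_coe.mp he)
      rcases Finset.mem_insert.mp this with h | h
      · exact absurd h hef
      · exact h
    have hrt : Relation.ReflTransGen (G.Rel (↑σ₂ : Set E)) i (G.src f₁) := rtg_mono G hsub hc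
    have hcyc : Relation.TransGen (G.Rel (↑σ₂ : Set E)) i i :=
      Relation.TransGen.tail' hrt ⟨f₁, hf1in, rfl, ht1⟩
    exact no_cycle G (tree_uniq G h2) h2.2.2.1 (h2.2.2.2 i trivial) hcyc
  · -- path from i to src f₂ within σ₁ : cycle in σ₁
    have hrt : Relation.ReflTransGen (G.Rel (↑σ₁ : Set E)) i (G.src f₂) :=
      rtg_mono G (Set.diff_subset) hc
    have hcyc : Relation.TransGen (G.Rel (↑σ₁ : Set E)) i i :=
      Relation.TransGen.tail' hrt ⟨f₂, hf2in, rfl, ht2⟩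
    exact no_cycle G (tree_uniq G h1) h1.2.2.1 (h1.2.2.2 i trivial) hcyc

lemma good_surj {i : V} {g : Finset E} (hg : IsGood G i g) :
    ∃ f ∈ g, G.tgt f = i ∧ G.IsSpanningTree (g.erase f) (G.src f) ∧ insert f (g.erase f) = g := by
  obtain ⟨e₀, ⟨he₀, hs₀⟩, _⟩ := hg.1 i
  have htg : Relation.TransGen (G.Rel (↑g : Set E)) i i :=
    Relation.TransGen.head' ⟨e₀, he₀, hs₀, rfl⟩ (hg.2 (G.tgt e₀))
  obtain ⟨x, hix, e, he, hes, het⟩ := Relation.TransGen.tail'_iff.mp htg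
  have hreach : ∀ w : V, Relation.ReflTransGen (G.Rel (↑g : Set E)) w (G.src e) := by
    intro w
    exact (hg.2 w).trans (hes ▸ hix)
  exact ⟨e, he, het, tree_of_good G hg he hreach, Finset.insert_erase he⟩
end TreeId
section Sums
open Relation Finset MyAux
open scoped Classical

variable {V E : Type} [Fintype V] [Fintype E] (G : Multidigraph V E) (v : E → ℝ)

lemma sum_out (i : V) :
    (∑ e ∈ Finset.univ.filter (fun e => G.src e = i), v e) *
      (∑ τ ∈ Finset.univ.filter (fun τ : Finset E => G.IsSpanningTree τ i), ∏ e ∈ τ, v e)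
    = ∑ g ∈ Finset.univ.filter (IsGood G i), ∏ e ∈ g, v e := by
  rw [Finset.sum_mul_sum, ← Finset.sum_product']
  refine Finset.sum_bij (fun p _ => insert p.1 p.2) ?_ ?_ ?_ ?_
  · rintro ⟨e, τ⟩ hp
    obtain ⟨he, hτ⟩ := Finset.mem_product.mp hp
    exact Finset.mem_filter.mpr ⟨Finset.mem_univ _,
      good_insert_out G (Finset.mem_filter.mp hτ).2 (Finset.mem_filter.mp he).2⟩
  · rintro ⟨e₁, τ₁⟩ hp₁ ⟨e₂, τ₂⟩ hp₂ heq
    replace heq : insert e₁ τ₁ = insert e₂ τ₂ := heq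
    obtain ⟨he₁, hτ₁⟩ := Finset.mem_product.mp hp₁
    obtain ⟨he₂, hτ₂⟩ := Finset.mem_product.mp hp₂
    have hs₁ : G.src e₁ = i := (Finset.mem_filter.mp he₁).2
    have hs₂ : G.src e₂ = i := (Finset.mem_filter.mp he₂).2
    have ht₁ := (Finset.mem_filter.mp hτ₁).2
    have ht₂ := (Finset.mem_filter.mp hτ₂).2
    have hn₁ : e₁ ∉ τ₁ := fun h => ht₁.2.2.1 e₁ h hs₁
    have hn₂ : e₂ ∉ τ₂ := fun h => ht₂.2.2.1 e₂ h hs₂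
    have hee : e₁ = e₂ := by
      have : e₂ ∈ insert e₁ τ₁ := heq ▸ Finset.mem_insert_self e₂ τ₂
      rcases Finset.mem_insert.mp this with h | h
      · exact h.symm
      · exact absurd hs₂ (ht₁.2.2.1 e₂ h)
    subst hee
    have : τ₁ = τ₂ := by
      rw [← Finset.erase_insert hn₁, ← Finset.erase_insert hn₂, heq]
    rw [this]
  · intro g hg
    have hgood := (Finset.mem_filter.mp hg).2
    obtain ⟨e₀, ⟨he₀, hs₀⟩, _⟩ := hgood.1 i
    have hreach : ∀ w : V, Relation.ReflTransGen (G.Rel (↑g : Set E)) w (G.src e₀) := by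
      intro w; rw [hs₀]; exact hgood.2 w
    have htree := tree_of_good G hgood he₀ hreach
    rw [hs₀] at htree
    refine ⟨⟨e₀, g.erase e₀⟩, Finset.mem_product.mpr ⟨Finset.mem_filter.mpr ⟨Finset.mem_univ _, hs₀⟩,
      Finset.mem_filter.mpr ⟨Finset.mem_univ _, htree⟩⟩, Finset.insert_erase he₀⟩
  · rintro ⟨e, τ⟩ hp
    obtain ⟨he, hτ⟩ := Finset.mem_product.mp hp
    have hn : e ∉ τ := fun h =>
      (Finset.mem_filter.mp hτ).2.2.2.1 e h (Finset.mem_filter.mp he).2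
    exact (Finset.prod_insert hn).symm

lemma sum_in (i : V) :
    (∑ f ∈ Finset.univ.filter (fun e => G.tgt e = i), v f *
      (∑ σ ∈ Finset.univ.filter (fun τ : Finset E => G.IsSpanningTree τ (G.src f)), ∏ e ∈ σ, v e))
    = ∑ g ∈ Finset.univ.filter (IsGood G i), ∏ e ∈ g, v e := by
  have h1 : ∀ f ∈ Finset.univ.filter (fun e => G.tgt e = i),
      v f * (∑ σ ∈ Finset.univ.filter (fun τ : Finset E => G.IsSpanningTree τ (G.src f)), ∏ e ∈ σ, v e)
      = ∑ σ ∈ Finset.univ.filter (fun τ : Finset E => G.IsSpanningTree τ (G.src f)), v f * ∏ e ∈ σ, v e :=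
    fun f _ => Finset.mul_sum _ _ _
  rw [Finset.sum_congr rfl h1, Finset.sum_sigma' (Finset.univ.filter (fun e => G.tgt e = i))
    (fun f => Finset.univ.filter (fun τ : Finset E => G.IsSpanningTree τ (G.src f)))
    (fun f σ => v f * ∏ e ∈ σ, v e)]
  refine Finset.sum_bij (fun p _ => insert p.1 p.2) ?_ ?_ ?_ ?_
  · rintro ⟨f, σ⟩ hp
    obtain ⟨hf, hσ⟩ := Finset.mem_sigma.mp hp
    exact Finset.mem_filter.mpr ⟨Finset.mem_univ _,
      good_insert_in G (Finset.mem_filter.mp hσ).2 (Finset.mem_filter.mp hf).2⟩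
  · rintro ⟨f₁, σ₁⟩ hp₁ ⟨f₂, σ₂⟩ hp₂ heq
    replace heq : insert f₁ σ₁ = insert f₂ σ₂ := heq
    obtain ⟨hf₁, hσ₁⟩ := Finset.mem_sigma.mp hp₁
    obtain ⟨hf₂, hσ₂⟩ := Finset.mem_sigma.mp hp₂
    have hff : f₁ = f₂ := key_inj G (Finset.mem_filter.mp hσ₁).2 (Finset.mem_filter.mp hσ₂).2
      (Finset.mem_filter.mp hf₁).2 (Finset.mem_filter.mp hf₂).2 heq
    subst hff
    have hn₁ : f₁ ∉ σ₁ := fun h => (Finset.mem_filter.mp hσ₁).2.2.2.1 f₁ h rfl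
    have hn₂ : f₁ ∉ σ₂ := fun h => (Finset.mem_filter.mp hσ₂).2.2.2.1 f₁ h rfl
    have : σ₁ = σ₂ := by
      rw [← Finset.erase_insert hn₁, ← Finset.erase_insert hn₂, heq]
    rw [this]
  · intro g hg
    have hgood := (Finset.mem_filter.mp hg).2
    obtain ⟨f, hf, hft, htree, hins⟩ := good_surj G hgood
    exact ⟨⟨f, g.erase f⟩, Finset.mem_sigma.mpr ⟨Finset.mem_filter.mpr ⟨Finset.mem_univ _, hft⟩,
      Finset.mem_filter.mpr ⟨Finset.mem_univ _, htree⟩⟩, hins⟩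
  · rintro ⟨f, σ⟩ hp
    obtain ⟨hf, hσ⟩ := Finset.mem_sigma.mp hp
    have hn : f ∉ σ := fun h => (Finset.mem_filter.mp hσ).2.2.2.1 f h rfl
    exact (Finset.prod_insert hn).symm

end Sums

section Final
open Relation Finset MyAux
open scoped Classical

variable {V E : Type} [Fintype V] [Fintype E] (G : Multidigraph V E) (v : E → ℝ)

/-- Total tree weight rooted at `j`. -/
noncomputable def Wt (j : V) : ℝ :=
  ∑ τ ∈ Finset.univ.filter (fun τ : Finset E => G.IsSpanningTree τ j), ∏ e ∈ τ, v e

lemma Wt_pos (hsc : G.StronglyConnected) (hv : ∀ e, 0 < v e) (j : V) : 0 < Wt G v j := by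
  apply Finset.sum_pos
  · intro τ _
    exact Finset.prod_pos (fun e _ => hv e)
  · obtain ⟨τ, hτ⟩ := exists_spanning_tree G hsc j
    exact ⟨τ, Finset.mem_filter.mpr ⟨Finset.mem_univ _, hτ⟩⟩

lemma Wt_eq (i : V) :
    (∑ e ∈ Finset.univ.filter (fun e => G.tgt e = i), v e * Wt G v (G.src e))
      = (∑ e ∈ Finset.univ.filter (fun e => G.src e = i), v e) * Wt G v i := by
  unfold Wt
  rw [sum_in G v i, ← sum_out G v i]

end Final

open MyAux

open scoped Classical

/-- Elimination formula, strongly connected case without `*`: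
the steady-state equations together with `Σ u_i = T` have the unique solution
given by the Markov-chain tree formula; the solution is nonnegative when
`T ≥ 0` and positive when `T > 0`. -/
theorem stmt15 {V E : Type} [Fintype V] [Fintype E] [Nonempty V]
    (G : Multidigraph V E) (hsc : G.StronglyConnected)
    (v : E → ℝ) (hv : ∀ e, 0 < v e) (T : ℝ) :
    (∀ u : V → ℝ,
      ((∀ i : V,
          (∑ e ∈ Finset.univ.filter (fun e => G.tgt e = i), v e * u (G.src e))
            - (∑ e ∈ Finset.univ.filter (fun e => G.src e = i), v e) * u i = 0) ∧
        (∑ i : V, u i) = T)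
      ↔ ∀ i : V, u i =
          T * (∑ τ ∈ Finset.univ.filter (fun τ : Finset E => G.IsSpanningTree τ i),
                ∏ e ∈ τ, v e)
            / (∑ j : V, ∑ τ ∈ Finset.univ.filter (fun τ : Finset E => G.IsSpanningTree τ j),
                ∏ e ∈ τ, v e)) ∧
    (0 ≤ T → ∀ i : V,
      0 ≤ T * (∑ τ ∈ Finset.univ.filter (fun τ : Finset E => G.IsSpanningTree τ i),
                ∏ e ∈ τ, v e)
            / (∑ j : V, ∑ τ ∈ Finset.univ.filter (fun τ : Finset E => G.IsSpanningTree τ j),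
                ∏ e ∈ τ, v e)) ∧
    (0 < T → ∀ i : V,
      0 < T * (∑ τ ∈ Finset.univ.filter (fun τ : Finset E => G.IsSpanningTree τ i),
                ∏ e ∈ τ, v e)
            / (∑ j : V, ∑ τ ∈ Finset.univ.filter (fun τ : Finset E => G.IsSpanningTree τ j),
                ∏ e ∈ τ, v e)) := by
  have hWpos : ∀ j, 0 < Wt G v j := Wt_pos G v hsc hv
  have hDpos : 0 < ∑ j : V, Wt G v j :=
    Finset.sum_pos (fun j _ => hWpos j) ⟨Classical.arbitrary V, Finset.mem_univ _⟩
  have hDne : (∑ j : V, Wt G v j) ≠ 0 := ne_of_gt hDpos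
  show (∀ u : V → ℝ, _ ↔ ∀ i : V, u i = T * Wt G v i / ∑ j : V, Wt G v j) ∧
    (0 ≤ T → ∀ i : V, 0 ≤ T * Wt G v i / ∑ j : V, Wt G v j) ∧
    (0 < T → ∀ i : V, 0 < T * Wt G v i / ∑ j : V, Wt G v j)
  refine ⟨?_, ?_, ?_⟩
  · intro u
    constructor
    · rintro ⟨heq, hsum⟩
      obtain ⟨i₀, _, hmax⟩ := Finset.exists_max_image Finset.univ (fun j => u j / Wt G v j)
        ⟨Classical.arbitrary V, Finset.mem_univ _⟩
      set M := u i₀ / Wt G v i₀ with hM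
      have hle : ∀ j, u j ≤ M * Wt G v j := by
        intro j
        have h := hmax j (Finset.mem_univ j)
        rwa [div_le_iff₀ (hWpos j)] at h
      have hSall : ∀ j, u j = M * Wt G v j := by
        set S : Set V := {j | u j = M * Wt G v j} with hS
        have hi₀ : i₀ ∈ S := by
          show u i₀ = M * Wt G v i₀
          rw [hM, div_mul_cancel₀ _ (ne_of_gt (hWpos i₀))]
        have hcl : ∀ a b, G.Rel Set.univ a b → b ∈ S → a ∈ S := by
          rintro a b ⟨e₀, _, hs₀, ht₀⟩ hb
          have hbS : u b = M * Wt G v b := hb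
          have heqb : ∑ e ∈ Finset.univ.filter (fun e => G.tgt e = b), v e * u (G.src e)
              = (∑ e ∈ Finset.univ.filter (fun e => G.src e = b), v e) * u b :=
            sub_eq_zero.mp (heq b)
          have hzero : ∑ e ∈ Finset.univ.filter (fun e => G.tgt e = b),
              v e * (M * Wt G v (G.src e) - u (G.src e)) = 0 := by
            have step1 : ∑ e ∈ Finset.univ.filter (fun e => G.tgt e = b),
                v e * (M * Wt G v (G.src e) - u (G.src e))
                = M * (∑ e ∈ Finset.univ.filter (fun e => G.tgt e = b), v e * Wt G v (G.src e))
                  - ∑ e ∈ Finset.univ.filter (fun e => G.tgt e = b), v e * u (G.src e) := by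
              rw [Finset.mul_sum, ← Finset.sum_sub_distrib]
              exact Finset.sum_congr rfl (fun e _ => by ring)
            rw [step1, Wt_eq G v b, heqb, hbS]
            ring
          have hterm := (Finset.sum_eq_zero_iff_of_nonneg (fun e _ =>
            mul_nonneg (hv e).le (by linarith [hle (G.src e)]))).mp hzero e₀
            (Finset.mem_filter.mpr ⟨Finset.mem_univ _, ht₀⟩)
          have h0 : M * Wt G v (G.src e₀) - u (G.src e₀) = 0 := by
            rcases mul_eq_zero.mp hterm with h | h
            · exact absurd h (ne_of_gt (hv e₀))
            · exact h
          show u a = M * Wt G v a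
          rw [← hs₀]
          linarith
        intro j
        exact closure_rtg hcl (hsc j i₀) hi₀
      have hTD : T = M * (∑ j : V, Wt G v j) := by
        rw [← hsum, Finset.mul_sum]
        exact Finset.sum_congr rfl (fun j _ => hSall j)
      intro i
      rw [hSall i, hTD]
      field_simp
    · intro h
      have hu : ∀ j, u j = (T / ∑ j : V, Wt G v j) * Wt G v j := by
        intro j
        rw [h j]
        ring
      constructor
      · intro i
        have step1 : ∑ e ∈ Finset.univ.filter (fun e => G.tgt e = i), v e * u (G.src e)
            = (T / ∑ j : V, Wt G v j) *
              ∑ e ∈ Finset.univ.filter (fun e => G.tgt e = i), v e * Wt G v (G.src e) := by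
          rw [Finset.mul_sum]
          exact Finset.sum_congr rfl (fun e _ => by rw [hu (G.src e)]; ring)
        rw [step1, Wt_eq G v i, hu i]
        ring
      · have : ∑ i : V, u i = (T / ∑ j : V, Wt G v j) * ∑ j : V, Wt G v j := by
          rw [Finset.mul_sum]
          exact Finset.sum_congr rfl (fun j _ => hu j)
        rw [this, div_mul_cancel₀ _ hDne]
  · intro hT i
    exact div_nonneg (mul_nonneg hT (hWpos i).le) hDpos.le
  · intro hT i
    exact div_pos (mul_pos hT (hWpos i)) hDpos
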